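/- Let (X, ρ) be a metric space, λ ∈ Δ∞, and x = (x_k)_{k∈ℕ} a sequence in X. Then the set Γ_x(λ) of λ-statistical cluster points of x is a closed subset of X. (This is the paper's Theorem 4.4, specialized to the PM space induced by a metric, where F_{xy} = ε_{ρ(x,y)} and the strong topology is the metric topology.) -/

import Mathlib

open Filter Topology

/-- `l` belongs to the class `Δ∞`: a nondecreasing (for indices `≥ 1`) sequence of
positive reals tending to `∞` with `l 1 = 1` and `l (n+1) ≤ l n + 1`. -/
def DeltaInfty (l : ℕ → ℝ) : Prop :=
  (∀ n, 1 ≤ n → 0 < l n) ∧ (∀ m n, 1 ≤ m → m ≤ n → l m ≤ l n) ∧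
    Tendsto l atTop atTop ∧ l 1 = 1 ∧ ∀ n, 1 ≤ n → l (n + 1) ≤ l n + 1

open Classical in
/-- The number of elements of `M` in the window `I_n = [n - l n + 1, n] ∩ ℕ`. -/
noncomputable def lamCount (l : ℕ → ℝ) (M : Set ℕ) (n : ℕ) : ℕ :=
  ((Finset.Icc 1 n).filter (fun (k : ℕ) => ((n : ℝ) - l n + 1 ≤ (k : ℝ)) ∧ k ∈ M)).card

/-- `M ⊆ ℕ` has `λ`-density `r`: `|{k ∈ I_n : k ∈ M}| / l n → r`. -/
def lamDensity (l : ℕ → ℝ) (M : Set ℕ) (r : ℝ) : Prop :=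
  Tendsto (fun n => (lamCount l M n : ℝ) / l n) atTop (𝓝 r)

/-- `Y` is a `λ`-statistical cluster point of `x`: for every `t > 0` the set
`{k : dist (x k) Y < t}` does not have `λ`-density zero. -/
def LamStatClusterPt {X : Type*} [MetricSpace X] (l : ℕ → ℝ) (x : ℕ → X) (Y : X) : Prop :=
  ∀ t > 0, ¬ lamDensity l {k | dist (x k) Y < t} 0

lemma lamCount_mono (l : ℕ → ℝ) {M N : Set ℕ} (h : M ⊆ N) (n : ℕ) :
    lamCount l M n ≤ lamCount l N n := by
  classical
  apply Finset.card_le_card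
  apply Finset.monotone_filter_right
  intro k hk
  exact fun hk' => ⟨hk'.1, h hk'.2⟩

lemma lamDensity_zero_mono (l : ℕ → ℝ) (hl : DeltaInfty l) {M N : Set ℕ}
    (h : M ⊆ N) (hN : lamDensity l N 0) : lamDensity l M 0 := by
  apply tendsto_of_tendsto_of_tendsto_of_le_of_le' (tendsto_const_nhds : Tendsto (fun _ : ℕ => (0:ℝ)) atTop (𝓝 0)) hN
  · filter_upwards [eventually_ge_atTop 1] with n hn
    exact div_nonneg (Nat.cast_nonneg _) (hl.1 n hn).le
  · filter_upwards [eventually_ge_atTop 1] with n hn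
    exact div_le_div_of_nonneg_right (by exact_mod_cast lamCount_mono l h n) (hl.1 n hn).le

theorem lamStatClusterPts_isClosed {X : Type*} [MetricSpace X]
    (l : ℕ → ℝ) (hl : DeltaInfty l) (x : ℕ → X) :
    IsClosed {Y | LamStatClusterPt l x Y} := by
  rw [← isOpen_compl_iff, Metric.isOpen_iff]
  intro Y hY
  simp only [Set.mem_compl_iff, Set.mem_setOf_eq, LamStatClusterPt] at hY
  push_neg at hY
  obtain ⟨t, ht, hdens⟩ := hY
  refine ⟨t / 2, half_pos ht, fun Z hZ hcl => ?_⟩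
  apply hcl (t / 2) (half_pos ht)
  apply lamDensity_zero_mono l hl _ hdens
  intro k hk
  simp only [Set.mem_setOf_eq] at *
  calc dist (x k) Y ≤ dist (x k) Z + dist Z Y := dist_triangle _ _ _
    _ < t / 2 + t / 2 := add_lt_add hk (by simpa [Metric.mem_ball] using hZ)
    _ = t := add_halves t
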